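/- Let X be a normal space of covering dimension at most 1. For any continuous map f : X → ℂ and any continuous ε : X → ℝ_{>0}, there exists a continuous g : X → ℂ with g(x) ≠ 0 and |f(x) − g(x)| < ε(x) for all x ∈ X. In particular, invertible-valued perturbations of complex-valued functions exist on 1-dimensional normal spaces. -/

import Mathlib

/-- Covering dimension at most `n`: every open cover has an open refinement in which
each point lies in at most `n + 1` members. -/
def CovDimLE (X : Type) [TopologicalSpace X] (n : ℕ) : Prop :=
  ∀ 𝒰 : Set (Set X), (∀ U ∈ 𝒰, IsOpen U) → ⋃₀ 𝒰 = Set.univ →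
    ∃ 𝒱 : Set (Set X), (∀ V ∈ 𝒱, IsOpen V) ∧ ⋃₀ 𝒱 = Set.univ ∧
      (∀ V ∈ 𝒱, ∃ U ∈ 𝒰, V ⊆ U) ∧
      ∀ x : X, {V ∈ 𝒱 | x ∈ V}.Finite ∧ {V ∈ 𝒱 | x ∈ V}.ncard ≤ n + 1

noncomputable def gpc (p : ℤ × ℤ) : ℂ := (p.1 + p.2 * Complex.I) / 8

noncomputable def ctld : ℂ := (Real.sqrt 2 + Complex.I) / 80

noncomputable def apt (p : ℤ × ℤ) : ℂ := gpc p - ctld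

lemma gpc_re (p : ℤ × ℤ) : (gpc p).re = p.1 / 8 := by
  simp [gpc, Complex.div_re]

lemma gpc_im (p : ℤ × ℤ) : (gpc p).im = p.2 / 8 := by
  simp [gpc, Complex.div_im]

lemma ctld_re : ctld.re = Real.sqrt 2 / 80 := by
  simp [ctld, Complex.div_re]

lemma ctld_im : ctld.im = 1 / 80 := by
  simp [ctld, Complex.div_im]

/-- Core "no antipodal pair" lemma: a positive combination of two shifted grid
points is never zero. -/
lemma arith1 (α β : ℝ) (p q : ℤ × ℤ) (hα : 0 < α) (hβ : 0 < β) :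
    (α : ℂ) * apt p + (β : ℂ) * apt q ≠ 0 := by
  intro heq
  have hre := congrArg Complex.re heq
  have him := congrArg Complex.im heq
  simp [apt, Complex.add_re, Complex.add_im, Complex.mul_re, Complex.mul_im,
    Complex.sub_re, Complex.sub_im, gpc_re, gpc_im, ctld_re, ctld_im] at hre him
  -- hre : α * (p.1/8 - √2/80) + β * (q.1/8 - √2/80) = 0
  -- him : α * (p.2/8 - 1/80) + β * (q.2/8 - 1/80) = 0
  by_cases hd : q.2 = p.2
  · rw [hd] at him
    have h10 : ((10 * p.2 : ℤ) : ℝ) = 1 := by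
      push_cast
      nlinarith [him]
    have : (10 * p.2 : ℤ) = 1 := by exact_mod_cast h10
    omega
  · set u := Real.sqrt 2 with hu
    have hdne : ((q.2 - p.2 : ℤ) : ℝ) ≠ 0 := by
      simpa using sub_ne_zero.mpr (fun h => hd (by exact_mod_cast h))
    have key : ((q.2 - p.2 : ℤ) : ℝ) * u =
        ((10 * (p.1 * q.2 - p.2 * q.1) + (q.1 - p.1) : ℤ) : ℝ) := by
      have hs : 0 < α + β := by linarith
      have hmul : (((q.2 - p.2 : ℤ) : ℝ) * u -
          ((10 * (p.1 * q.2 - p.2 * q.1) + (q.1 - p.1) : ℤ) : ℝ)) * (α + β) = 0 := by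
        push_cast
        linear_combination (-(80 * ((q.2 : ℝ) - p.2))) * hre + (80 * ((q.1 : ℝ) - p.1)) * him
      have := mul_eq_zero.mp hmul
      rcases this with h | h
      · linarith [sub_eq_zero.mp h]
      · linarith
    apply irrational_sqrt_two
    refine ⟨((10 * (p.1 * q.2 - p.2 * q.1) + (q.1 - p.1) : ℤ) : ℚ) / ((q.2 - p.2 : ℤ) : ℚ), ?_⟩
    rw [eq_comm, ← hu]
    have h2 : u = ((10 * (p.1 * q.2 - p.2 * q.1) + (q.1 - p.1) : ℤ) : ℝ) / ((q.2 - p.2 : ℤ) : ℝ) := by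
      rw [eq_div_iff hdne]
      linear_combination key
    rw [h2]
    push_cast
    ring

lemma apt_ne (p : ℤ × ℤ) : apt p ≠ 0 := by
  intro h
  have := arith1 1 1 p p one_pos one_pos
  apply this
  rw [h]; ring

lemma ctld_abs : ‖ctld‖ ≤ 1/32 := by
  have h2 : Real.sqrt 2 ≤ 1.5 := by
    rw [show (1.5:ℝ) = Real.sqrt 2.25 by
      rw [show (2.25:ℝ) = 1.5^2 by norm_num, Real.sqrt_sq (by norm_num)]]
    exact Real.sqrt_le_sqrt (by norm_num)
  have : ‖ctld‖ = ‖(Real.sqrt 2 : ℝ) + Complex.I‖ / 80 := by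
    rw [ctld, norm_div]
    norm_num
  rw [this]
  have hle : ‖(Real.sqrt 2 : ℝ) + Complex.I‖ ≤ Real.sqrt 2 + 1 := by
    refine le_trans (norm_add_le _ _) ?_
    simp [Complex.norm_real, Real.norm_eq_abs, abs_of_nonneg (Real.sqrt_nonneg 2)]
  linarith

lemma gpc_ne_abs {p : ℤ × ℤ} (h : gpc p ≠ 0) : 1/8 ≤ ‖gpc p‖ := by
  have hp : p.1 ≠ 0 ∨ p.2 ≠ 0 := by
    by_contra hc
    push_neg at hc
    apply h
    apply Complex.ext <;> simp [gpc_re, gpc_im, hc.1, hc.2]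
  rcases hp with hp | hp
  · have h1 : (1:ℝ)/8 ≤ |(gpc p).re| := by
      rw [gpc_re, abs_div]
      have : (1:ℝ) ≤ |(p.1 : ℝ)| := by
        rw [← Int.cast_abs]
        exact_mod_cast Int.one_le_abs hp
      rw [abs_of_nonneg (by norm_num : (0:ℝ) ≤ 8)]
      linarith
    exact h1.trans (Complex.abs_re_le_norm _)
  · have h1 : (1:ℝ)/8 ≤ |(gpc p).im| := by
      rw [gpc_im, abs_div]
      have : (1:ℝ) ≤ |(p.2 : ℝ)| := by
        rw [← Int.cast_abs]
        exact_mod_cast Int.one_le_abs hp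
      rw [abs_of_nonneg (by norm_num : (0:ℝ) ≤ 8)]
      linarith
    exact h1.trans (Complex.abs_im_le_norm _)

lemma arith2 (α β : ℝ) (w : ℂ) (p : ℤ × ℤ) (hα : 0 < α) (hβ : 0 < β)
    (hw : 1/4 < ‖w‖) (hball : ‖w - gpc p‖ < 1/4) :
    (α : ℂ) * w + (β : ℂ) * apt p ≠ 0 := by
  intro heq
  have hβc : (β : ℂ) ≠ 0 := by exact_mod_cast hβ.ne'
  have ha : apt p = -((α : ℂ)/(β : ℂ)) * w := by
    field_simp
    linear_combination heq
  have habs : ‖apt p‖ = (α/β) * ‖w‖ := by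
    rw [ha]
    rw [norm_mul, norm_neg, norm_div, Complex.norm_real, Real.norm_eq_abs, Complex.norm_real, Real.norm_eq_abs,
      abs_of_pos hα, abs_of_pos hβ]
  have hsub : ‖w - apt p‖ = (1 + α/β) * ‖w‖ := by
    have : w - apt p = ((1 + α/β : ℝ) : ℂ) * w := by
      rw [ha]; push_cast; ring
    rw [this, norm_mul, Complex.norm_real, Real.norm_eq_abs,
      abs_of_pos (by positivity : (0:ℝ) < 1 + α/β)]
  have hub : ‖w - apt p‖ ≤ ‖w - gpc p‖ + ‖ctld‖ := by
    have : w - apt p = (w - gpc p) + ctld := by rw [apt]; ring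
    rw [this]
    exact norm_add_le _ _
  have hgpc : gpc p ≠ 0 := by
    intro h0
    rw [h0, sub_zero] at hball
    linarith
  have hlb : 3/32 ≤ ‖apt p‖ := by
    have h1 := gpc_ne_abs hgpc
    have h2 : ‖gpc p‖ ≤ ‖apt p‖ + ‖ctld‖ := by
      have : gpc p = apt p + ctld := by rw [apt]; ring
      rw [this]
      exact norm_add_le _ _
    have := ctld_abs
    linarith
  have hr : 0 ≤ α / β := by positivity
  have hwpos : 0 ≤ ‖w‖ := norm_nonneg _
  have := ctld_abs
  nlinarith [habs, hsub, hub, hlb, hball, hw]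

lemma cover_lemma (z : ℂ) (hz : ‖z‖ ≤ 1/4) :
    ∃ p : ℤ × ℤ, |p.1| ≤ 5 ∧ |p.2| ≤ 5 ∧ z ∈ Metric.ball (gpc p) (1/4) := by
  refine ⟨(round (8 * z.re), round (8 * z.im)), ?_, ?_, ?_⟩
  · have h1 : |z.re| ≤ 1/4 := (Complex.abs_re_le_norm z).trans hz
    have h2 := abs_sub_round (8 * z.re)
    have h5 : |((round (8 * z.re) : ℤ) : ℝ)| < 3 := by
      have := abs_sub_abs_le_abs_sub (round (8 * z.re) : ℝ) (8 * z.re)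
      rw [abs_sub_comm] at this
      have h3 : |8 * z.re| ≤ 2 := by rw [abs_mul]; norm_num; linarith
      linarith
    rw [abs_lt] at h5
    have h6 : -3 < round (8 * z.re) := by exact_mod_cast h5.1
    have h7 : round (8 * z.re) < 3 := by exact_mod_cast h5.2
    show |round (8 * z.re)| ≤ 5
    rw [abs_le]
    omega
  · have h1 : |z.im| ≤ 1/4 := (Complex.abs_im_le_norm z).trans hz
    have h2 := abs_sub_round (8 * z.im)
    have hh5 : |((round (8 * z.im) : ℤ) : ℝ)| < 3 := by
      have := abs_sub_abs_le_abs_sub (round (8 * z.im) : ℝ) (8 * z.im)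
      rw [abs_sub_comm] at this
      have hh3 : |8 * z.im| ≤ 2 := by rw [abs_mul]; norm_num; linarith
      linarith
    rw [abs_lt] at hh5
    have hh6 : -3 < round (8 * z.im) := by exact_mod_cast hh5.1
    have hh7 : round (8 * z.im) < 3 := by exact_mod_cast hh5.2
    show |round (8 * z.im)| ≤ 5
    rw [abs_le]
    omega
  · rw [Metric.mem_ball, Complex.dist_eq]
    refine lt_of_le_of_lt (Complex.norm_le_abs_re_add_abs_im _) ?_
    have hre : |(z - gpc (round (8 * z.re), round (8 * z.im))).re| ≤ 1/16 := by
      rw [Complex.sub_re, gpc_re]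
      have h2 := abs_sub_round (8 * z.re)
      rw [show z.re - (round (8 * z.re) : ℝ)/8 = (8 * z.re - round (8 * z.re))/8 by ring,
        abs_div]
      rw [abs_of_nonneg (by norm_num : (0:ℝ) ≤ 8)]
      linarith
    have him : |(z - gpc (round (8 * z.re), round (8 * z.im))).im| ≤ 1/16 := by
      rw [Complex.sub_im, gpc_im]
      have h2 := abs_sub_round (8 * z.im)
      rw [show z.im - (round (8 * z.im) : ℝ)/8 = (8 * z.im - round (8 * z.im))/8 by ring,
        abs_div]
      rw [abs_of_nonneg (by norm_num : (0:ℝ) ≤ 8)]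
      linarith
    linarith

lemma apt_close {z : ℂ} {p : ℤ × ℤ} (h : z ∈ Metric.ball (gpc p) (1/4)) :
    ‖apt p - z‖ ≤ 1/2 := by
  rw [Metric.mem_ball, Complex.dist_eq] at h
  have : apt p - z = -(z - gpc p) - ctld := by rw [apt]; ring
  rw [this]
  rw [sub_eq_add_neg]
  refine le_trans (norm_add_le _ _) ?_
  rw [norm_neg, norm_neg]
  have := ctld_abs
  linarith

def ptIdx (p : Fin 11 × Fin 11) : ℤ × ℤ := ((p.1 : ℤ) - 5, (p.2 : ℤ) - 5)

noncomputable def uset : Option (Fin 11 × Fin 11) → Set ℂ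
  | none => {z | 1/4 < ‖z‖}
  | some p => Metric.ball (gpc (ptIdx p)) (1/4)

lemma uset_open (i : Option (Fin 11 × Fin 11)) : IsOpen (uset i) := by
  match i with
  | none => exact isOpen_lt continuous_const continuous_norm
  | some p => exact Metric.isOpen_ball

lemma uset_cover (z : ℂ) : ∃ i, z ∈ uset i := by
  by_cases hz : 1/4 < ‖z‖
  · exact ⟨none, hz⟩
  · obtain ⟨p, hp1, hp2, hpz⟩ := cover_lemma z (le_of_not_gt hz)
    rw [abs_le] at hp1 hp2
    refine ⟨some (⟨(p.1 + 5).toNat, by omega⟩, ⟨(p.2 + 5).toNat, by omega⟩), ?_⟩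
    have he : ptIdx (⟨(p.1 + 5).toNat, by omega⟩, ⟨(p.2 + 5).toNat, by omega⟩) = p := by
      have h1 : (((p.1 + 5).toNat : ℕ) : ℤ) = p.1 + 5 := Int.toNat_of_nonneg (by omega)
      have h2 : (((p.2 + 5).toNat : ℕ) : ℤ) = p.2 + 5 := Int.toNat_of_nonneg (by omega)
      ext <;> simp [ptIdx] <;> omega
    show z ∈ Metric.ball (gpc (ptIdx _)) (1/4)
    rw [he]
    exact hpz

noncomputable def vval (w : ℂ) : Option (Fin 11 × Fin 11) → ℂ
  | none => w
  | some p => apt (ptIdx p)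

lemma combo_ne (w : ℂ) (i j : Option (Fin 11 × Fin 11)) (hi : w ∈ uset i) (hj : w ∈ uset j)
    (α β : ℝ) (hα : 0 < α) (hβ : 0 < β) :
    (α : ℂ) * vval w i + (β : ℂ) * vval w j ≠ 0 := by
  match i, j with
  | none, none =>
    have hw : w ≠ 0 := by
      intro h0
      rw [h0] at hi
      simp [uset] at hi
      norm_num at hi
    have hab : ((α : ℂ) + (β : ℂ)) ≠ 0 := by
      have : (0:ℝ) < α + β := by linarith
      exact_mod_cast this.ne'
    show (α : ℂ) * w + (β : ℂ) * w ≠ 0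
    intro h0
    exact (mul_ne_zero hab hw) (by linear_combination h0)
  | none, some p =>
    have hi' : 1/4 < ‖w‖ := hi
    have hj' : ‖w - gpc (ptIdx p)‖ < 1/4 := by
      have := hj
      rwa [uset, Metric.mem_ball, Complex.dist_eq] at this
    exact arith2 α β w (ptIdx p) hα hβ hi' hj'
  | some p, none =>
    have hi' : 1/4 < ‖w‖ := hj
    have hj' : ‖w - gpc (ptIdx p)‖ < 1/4 := by
      have := hi
      rwa [uset, Metric.mem_ball, Complex.dist_eq] at this
    intro h0
    have h0' : (α : ℂ) * apt (ptIdx p) + (β : ℂ) * w = 0 := h0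
    exact arith2 β α w (ptIdx p) hβ hα hi' hj' (by linear_combination h0')
  | some p, some q => exact arith1 α β (ptIdx p) (ptIdx q) hα hβ
theorem stmt_10 (X : Type) [TopologicalSpace X] [NormalSpace X]
    (hdim : CovDimLE X 1)
    (f : X → ℂ) (hf : Continuous f)
    (ε : X → ℝ) (hε : Continuous ε) (hεpos : ∀ x, 0 < ε x) :
    ∃ g : X → ℂ, Continuous g ∧ ∀ x, g x ≠ 0 ∧ ‖f x - g x‖ < ε x := by
  classical
  set h : X → ℂ := fun x => f x / (ε x : ℂ) with hh_def
  have hεne : ∀ x, (ε x : ℂ) ≠ 0 := fun x => by exact_mod_cast (hεpos x).ne'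
  have hh : Continuous h := hf.div (Complex.continuous_ofReal.comp hε) hεne
  obtain ⟨𝒱, hVo, hVcov, hVref, hVpt⟩ :=
    hdim (Set.range fun i : Option (Fin 11 × Fin 11) => h ⁻¹' uset i)
      (by rintro U ⟨i, rfl⟩; exact (uset_open i).preimage hh)
      (by
        rw [Set.sUnion_range]
        apply Set.eq_univ_of_forall
        intro x
        obtain ⟨i, hi⟩ := uset_cover (h x)
        exact Set.mem_iUnion.mpr ⟨i, hi⟩)
  have hchoice : ∀ V : Set X, ∃ i : Option (Fin 11 × Fin 11), V ∈ 𝒱 → V ⊆ h ⁻¹' uset i := by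
    intro V
    by_cases hV : V ∈ 𝒱
    · obtain ⟨U, hU, hVU⟩ := hVref V hV
      obtain ⟨i, rfl⟩ := hU
      exact ⟨i, fun _ => hVU⟩
    · exact ⟨none, fun hc => absurd hc hV⟩
  choose Fc hFc using hchoice
  set G : Option (Fin 11 × Fin 11) → Set X := fun i => ⋃₀ {V | V ∈ 𝒱 ∧ Fc V = i} with hG_def
  have hGopen : ∀ i, IsOpen (G i) := fun i => isOpen_sUnion (fun V hV => hVo V hV.1)
  have hGsub : ∀ i, G i ⊆ h ⁻¹' uset i := by
    intro i
    refine Set.sUnion_subset ?_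
    rintro V ⟨hV, rfl⟩
    exact hFc V hV
  have hGcov : ⋃ i, G i = Set.univ := by
    apply Set.eq_univ_of_forall
    intro x
    have hx : x ∈ ⋃₀ 𝒱 := hVcov ▸ Set.mem_univ x
    obtain ⟨V, hV, hxV⟩ := hx
    refine Set.mem_iUnion.mpr ⟨Fc V, ?_⟩
    have hmem : V ∈ {W | W ∈ 𝒱 ∧ Fc W = Fc V} := ⟨hV, rfl⟩
    exact Set.subset_sUnion_of_mem hmem hxV
  have hGmult : ∀ x : X, {i : Option (Fin 11 × Fin 11) | x ∈ G i}.ncard ≤ 2 := by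
    intro x
    obtain ⟨hfin, hcard⟩ := hVpt x
    have hw : ∀ i : Option (Fin 11 × Fin 11),
        ∃ V : Set X, x ∈ G i → (V ∈ 𝒱 ∧ x ∈ V ∧ Fc V = i) := by
      intro i
      by_cases hx : x ∈ G i
      · simp only [hG_def, Set.mem_sUnion, Set.mem_setOf_eq] at hx
        obtain ⟨V, ⟨hV, hFV⟩, hxV⟩ := hx
        exact ⟨V, fun _ => ⟨hV, hxV, hFV⟩⟩
      · exact ⟨∅, fun hc => absurd hc hx⟩
    choose W hW using hw
    have hle : {i : Option (Fin 11 × Fin 11) | x ∈ G i}.ncard ≤ {V ∈ 𝒱 | x ∈ V}.ncard := by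
      refine Set.ncard_le_ncard_of_injOn W ?_ ?_ hfin
      · intro i hi
        exact ⟨(hW i hi).1, (hW i hi).2.1⟩
      · intro i hi j hj hij
        rw [← (hW i hi).2.2, ← (hW j hj).2.2, hij]
    exact hle.trans hcard
  have hptfin : ∀ x : X, {i : Option (Fin 11 × Fin 11) | x ∈ G i}.Finite :=
    fun x => Set.toFinite _
  obtain ⟨v, hvU, hvo, hvcl⟩ := exists_iUnion_eq_closure_subset hGopen hptfin hGcov
  have hury : ∀ i : Option (Fin 11 × Fin 11), ∃ φ : C(X, ℝ),
      Set.EqOn φ 0 (G i)ᶜ ∧ Set.EqOn φ 1 (closure (v i)) ∧ ∀ x, φ x ∈ Set.Icc (0:ℝ) 1 :=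
    fun i => exists_continuous_zero_one_of_isClosed (hGopen i).isClosed_compl isClosed_closure
      (disjoint_compl_left.mono_right (hvcl i))
  choose φ hφ0 hφ1 hφmem using hury
  have hφnonneg : ∀ i x, 0 ≤ φ i x := fun i x => (hφmem i x).1
  have hφle : ∀ i x, φ i x ≤ 1 := fun i x => (hφmem i x).2
  have hφG : ∀ i x, φ i x ≠ 0 → x ∈ G i := by
    intro i x hne
    by_contra hx
    exact hne (hφ0 i hx)
  set σ : X → ℝ := fun x => ∑ i : Option (Fin 11 × Fin 11), φ i x with hσ_def
  have hσcont : Continuous σ := continuous_finset_sum _ (fun i _ => (φ i).continuous)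
  have hσ1 : ∀ x, 1 ≤ σ x := by
    intro x
    have hx : x ∈ ⋃ i, v i := hvU ▸ Set.mem_univ x
    obtain ⟨i, hi⟩ := Set.mem_iUnion.mp hx
    have h1 : φ i x = 1 := hφ1 i (subset_closure hi)
    calc (1:ℝ) = φ i x := h1.symm
    _ ≤ σ x := Finset.single_le_sum (fun j _ => hφnonneg j x) (Finset.mem_univ i)
  have hσpos : ∀ x, (0:ℝ) < σ x := fun x => lt_of_lt_of_le one_pos (hσ1 x)
  have hσne : ∀ x, ((σ x : ℝ) : ℂ) ≠ 0 := fun x => by exact_mod_cast (hσpos x).ne'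
  set num : X → ℂ := fun x => ∑ i : Option (Fin 11 × Fin 11),
    ((φ i x : ℝ) : ℂ) * vval (h x) i with hnum_def
  have hnumcont : Continuous num := by
    apply continuous_finset_sum
    intro i _
    refine Continuous.mul (Complex.continuous_ofReal.comp (φ i).continuous) ?_
    match i with
    | none => exact hh
    | some p => exact continuous_const
  set k : X → ℂ := fun x => num x / ((σ x : ℝ) : ℂ) with hk_def
  have hkcont : Continuous k := hnumcont.div (Complex.continuous_ofReal.comp hσcont) hσne
  have husetx : ∀ i x, φ i x ≠ 0 → h x ∈ uset i := fun i x hne => hGsub i (hφG i x hne)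
  have hdist : ∀ x, ‖h x - k x‖ ≤ 1/2 := by
    intro x
    have hnum_sub : ((σ x : ℝ):ℂ) * h x - num x =
        ∑ i : Option (Fin 11 × Fin 11), ((φ i x : ℝ):ℂ) * (h x - vval (h x) i) := by
      rw [hnum_def, hσ_def]
      push_cast
      rw [Finset.sum_mul, ← Finset.sum_sub_distrib]
      apply Finset.sum_congr rfl
      intro i _
      ring
    have habs : ‖((σ x : ℝ):ℂ) * h x - num x‖ ≤ (1/2) * σ x := by
      rw [hnum_sub]
      refine le_trans (norm_sum_le _ _) ?_
      have hb : ∀ i ∈ Finset.univ,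
          ‖((φ i x : ℝ):ℂ) * (h x - vval (h x) i)‖ ≤ φ i x * (1/2) := by
        intro i _
        rw [norm_mul, Complex.norm_real, Real.norm_eq_abs, abs_of_nonneg (hφnonneg i x)]
        by_cases hz : φ i x = 0
        · simp [hz]
        · have hx' : h x ∈ uset i := husetx i x hz
          refine mul_le_mul_of_nonneg_left ?_ (hφnonneg i x)
          match i with
          | none => simp [vval]
          | some p =>
            have : h x - vval (h x) (some p) = -(apt (ptIdx p) - h x) := by
              rw [vval]; ring
            rw [this, norm_neg]
            exact apt_close hx'
      refine le_trans (Finset.sum_le_sum hb) ?_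
      rw [hσ_def, ← Finset.sum_mul]
      linarith
    have hkx : h x - k x = (((σ x : ℝ):ℂ) * h x - num x) / ((σ x : ℝ):ℂ) := by
      rw [hk_def, eq_div_iff (hσne x)]
      show (h x - num x / ((σ x : ℝ):ℂ)) * _ = _
      rw [sub_mul, div_mul_cancel₀ _ (hσne x)]
      ring
    rw [hkx, norm_div, Complex.norm_real, Real.norm_eq_abs, abs_of_pos (hσpos x)]
    rw [div_le_iff₀ (hσpos x)]
    linarith
  have hnum_ne : ∀ x, num x ≠ 0 := by
    intro x
    set S : Set (Option (Fin 11 × Fin 11)) := {i | φ i x ≠ 0} with hS_def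
    have hSsub : S ⊆ {i | x ∈ G i} := fun i hi => hφG i x hi
    have hScard : S.ncard ≤ 2 :=
      le_trans (Set.ncard_le_ncard hSsub (Set.toFinite _)) (hGmult x)
    have hSne : S.Nonempty := by
      rw [Set.nonempty_iff_ne_empty]
      intro hS
      have hz : σ x = 0 := by
        rw [hσ_def]
        apply Finset.sum_eq_zero
        intro i _
        by_contra hne
        exact absurd (hS ▸ (hne : i ∈ S)) (Set.notMem_empty i)
      linarith [hσ1 x]
    obtain ⟨i, hi⟩ := hSne
    have hij : ∃ j, j ∈ S ∧ S ⊆ {i, j} := by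
      by_cases hs : S ⊆ {i}
      · exact ⟨i, hi, hs.trans (by simp)⟩
      · rw [Set.subset_singleton_iff] at hs
        push_neg at hs
        obtain ⟨j, hj, hji⟩ := hs
        refine ⟨j, hj, ?_⟩
        intro l hl
        by_contra hlij
        simp only [Set.mem_insert_iff, Set.mem_singleton_iff, not_or] at hlij
        have hsub3 : ({i, j, l} : Set (Option (Fin 11 × Fin 11))) ⊆ S := by
          intro y hy
          rcases hy with rfl | rfl | rfl
          · exact hi
          · exact hj
          · exact hl
        have h3 : ({i, j, l} : Set (Option (Fin 11 × Fin 11))).ncard = 3 := by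
          rw [Set.ncard_insert_of_notMem (by simp [hji.symm, Ne.symm hlij.1]) (Set.toFinite _),
            Set.ncard_insert_of_notMem (by simp [Ne.symm hlij.2]) (Set.toFinite _),
            Set.ncard_singleton]
        have := Set.ncard_le_ncard hsub3 (Set.toFinite _)
        omega
    obtain ⟨j, hj, hSij⟩ := hij
    have hsum : num x = ∑ l ∈ ({i, j} : Finset (Option (Fin 11 × Fin 11))),
        ((φ l x : ℝ):ℂ) * vval (h x) l := by
      rw [hnum_def]
      symm
      apply Finset.sum_subset (Finset.subset_univ _)
      intro l _ hl
      have hlS : l ∉ S := by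
        intro hls
        have := hSij hls
        rcases this with rfl | rfl
        · exact hl (by simp)
        · exact hl (by simp)
      have : φ l x = 0 := by
        by_contra hne
        exact hlS hne
      simp [this]
    have hposi : 0 < φ i x := lt_of_le_of_ne (hφnonneg i x) (Ne.symm hi)
    have hui : h x ∈ uset i := husetx i x hi
    by_cases hijeq : i = j
    · subst hijeq
      have hpair : ({i, i} : Finset (Option (Fin 11 × Fin 11))) = {i} := by simp
      rw [hpair, Finset.sum_singleton] at hsum
      have hc := combo_ne (h x) i i hui hui (φ i x / 2) (φ i x / 2)
        (by linarith) (by linarith)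
      intro h0
      apply hc
      rw [hsum] at h0
      push_cast
      push_cast at h0
      linear_combination h0
    · rw [Finset.sum_pair hijeq] at hsum
      have hposj : 0 < φ j x := lt_of_le_of_ne (hφnonneg j x) (Ne.symm hj)
      have huj : h x ∈ uset j := husetx j x hj
      have hc := combo_ne (h x) i j hui huj (φ i x) (φ j x) hposi hposj
      intro h0
      exact hc (hsum ▸ h0)
  have hk_ne : ∀ x, k x ≠ 0 := fun x => div_ne_zero (hnum_ne x) (hσne x)
  refine ⟨fun x => ((ε x : ℝ):ℂ) * k x, (Complex.continuous_ofReal.comp hε).mul hkcont, ?_⟩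
  intro x
  refine ⟨mul_ne_zero (hεne x) (hk_ne x), ?_⟩
  have hfx : f x = ((ε x : ℝ):ℂ) * h x := by
    show f x = (ε x : ℂ) * (f x / (ε x : ℂ))
    rw [mul_comm, div_mul_cancel₀ _ (hεne x)]
  have hsub : f x - ((ε x : ℝ):ℂ) * k x = ((ε x : ℝ):ℂ) * (h x - k x) := by
    rw [hfx]; ring
  rw [hsub, norm_mul, Complex.norm_real, Real.norm_eq_abs, abs_of_pos (hεpos x)]
  have := hdist x
  nlinarith [hεpos x]
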